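/- Let k be an odd number. Then for no function f : ℕ → ℕ and positive integer c can the family Ψ'_{n,k} (n even, n ≥ k) be refuted in Resolution in size f(k)·n^c; that is, for every f and c there exist odd k and even n such that every Resolution refutation of Ψ'_{n,k} has size greater than f(k)·n^c. Consequently, embedded W[1]-parameterized Resolution is not fpt-bounded. (Lemma 6 / Lemma in Section 3.3 and its Corollary.) -/

import Mathlib

/-- A clause is a finite set of literals; a literal is a pair (variable, polarity). -/
abbrev Clause (V : Type) := Finset (V × Bool)

/-- An assignment satisfies a clause if it makes some literal of the clause true. -/
def satClause {V : Type} (α : V → Bool) (C : Clause V) : Prop :=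
  ∃ l ∈ C, α l.1 = l.2

/-- An assignment satisfies a CNF (a set of clauses) if it satisfies every clause. -/
def satCNF {V : Type} (α : V → Bool) (F : Set (Clause V)) : Prop :=
  ∀ C ∈ F, satClause α C

/-- A Resolution refutation of a set `F` of clauses: a finite sequence of clauses ending in
the empty clause, each clause being an axiom of `F`, a resolvent of two earlier clauses
(from `P ∨ x` and `Q ∨ ¬x` derive `P ∨ Q`), or a weakening of an earlier clause
(from `P` derive `P ∨ l`). Its size is the length of the sequence. -/
structure ResRefutation {V : Type} [DecidableEq V] (F : Set (Clause V)) where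
  seq : List (Clause V)
  ne : seq ≠ []
  lastEmpty : seq.getLast ne = (∅ : Clause V)
  valid : ∀ i (hi : i < seq.length),
    (seq[i]'hi ∈ F) ∨
    (∃ (j l : ℕ) (hj : j < i) (hl : l < i) (x : V) (P Q : Clause V),
      seq[j]'(hj.trans hi) = insert (x, true) P ∧
      seq[l]'(hl.trans hi) = insert (x, false) Q ∧
      seq[i]'hi = P ∪ Q) ∨
    (∃ (j : ℕ) (hj : j < i) (lit : V × Bool),
      seq[i]'hi = insert lit (seq[j]'(hj.trans hi)))

/-- The size of a Resolution refutation: the length of its sequence of clauses. -/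
def ResRefutation.size {V : Type} [DecidableEq V] {F : Set (Clause V)}
    (π : ResRefutation F) : ℕ :=
  π.seq.length

/-- Tree-Resolution derivations from the clause set `F`: each clause occurrence is used as a
premise of at most one inference. A tree-Resolution refutation of `F` is a `ResTree F ∅`. -/
inductive ResTree {V : Type} [DecidableEq V] (F : Set (Clause V)) : Clause V → Type where
  | ax (C : Clause V) (h : C ∈ F) : ResTree F C
  | res (x : V) (P Q : Clause V) (t₁ : ResTree F (insert (x, true) P))
      (t₂ : ResTree F (insert (x, false) Q)) : ResTree F (P ∪ Q)
  | weak (l : V × Bool) (C : Clause V) (t : ResTree F C) : ResTree F (insert l C)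

/-- The size of a tree-Resolution derivation: its number of clause occurrences. -/
def ResTree.size {V : Type} [DecidableEq V] {F : Set (Clause V)} :
    ∀ {C : Clause V}, ResTree F C → ℕ
  | _, .ax _ _ => 1
  | _, .res _ _ _ t₁ t₂ => t₁.size + t₂.size + 1
  | _, .weak _ _ t => t.size + 1

/-- The clauses `¬x_{i₁} ∨ ⋯ ∨ ¬x_{i_{k+1}}` over the variables in `Vars`. -/
def negClausesOn {V : Type} [DecidableEq V] (Vars : Finset V) (k : ℕ) : Set (Clause V) :=
  {C | ∃ S : Finset V, S ⊆ Vars ∧ S.card = k + 1 ∧ C = S.image (fun v => (v, false))}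

/-- The clauses `x_{i₁} ∨ ⋯ ∨ x_{i_{n-k+1}}` over the `n` variables in `Vars`. -/
def posClausesOn {V : Type} [DecidableEq V] (Vars : Finset V) (k : ℕ) : Set (Clause V) :=
  {C | ∃ S : Finset V, S ⊆ Vars ∧ S.card = Vars.card - k + 1 ∧ C = S.image (fun v => (v, true))}

/-- The weight of an assignment: the number of the `n` variables set to true. -/
def weight (n : ℕ) (α : ℕ → Bool) : ℕ :=
  ((Finset.range n).filter (fun i => α i = true)).card
/-- `Θ_{m,k}`: the CNF in the `n = m(k+1)` variables `v^j_i = m*i + j` (`i < k+1`, `j < m`),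
with the `k+1` clauses `v^1_i ∨ ⋯ ∨ v^m_i`. -/
def Theta (m k : ℕ) : Set (Clause ℕ) :=
  {C | ∃ i, i < k + 1 ∧ C = (Finset.range m).image (fun j => (m * i + j, true))}

/-- `Γ_Θ`: the `m^{k+1}` clauses `¬v^{a_1}_1 ∨ ⋯ ∨ ¬v^{a_{k+1}}_{k+1}` with `a_i ∈ [m]`. -/
def GammaTheta (m k : ℕ) : Set (Clause ℕ) :=
  {C | ∃ a : ℕ → ℕ, (∀ i, i < k + 1 → a i < m) ∧
    C = (Finset.range (k + 1)).image (fun i => (m * i + a i, false))}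

/-- `Ψ_{n,k}` (for `n` even): the CNF in variables `v_0, …, v_{n-1}` with clauses
`v_{2i} ∨ ¬v_{2i+1}` and `v_{2i+1} ∨ ¬v_{2i}` (i.e. `v_{2i} ↔ v_{2i+1}`). -/
def Psi (n : ℕ) : Set (Clause ℕ) :=
  {C | ∃ i, 2 * i + 1 < n ∧
    (C = {(2 * i, true), (2 * i + 1, false)} ∨ C = {(2 * i + 1, true), (2 * i, false)})}

/-- `Γ_Ψ` (for `k` odd): the `binom(n/2, (k+1)/2)` clauses
`¬v_{2a_1} ∨ ¬v_{2a_1+1} ∨ ⋯ ∨ ¬v_{2a_{(k+1)/2}} ∨ ¬v_{2a_{(k+1)/2}+1}` over sets `A` of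
`(k+1)/2` pairs. -/
def GammaPsi (n k : ℕ) : Set (Clause ℕ) :=
  {C | ∃ A : Finset ℕ, A ⊆ Finset.range (n / 2) ∧ A.card = (k + 1) / 2 ∧
    C = (A.biUnion (fun a => ({2 * a, 2 * a + 1} : Finset ℕ))).image (fun v => (v, false))}
/-- Variables of the embedded CNF: original variables `x_i`, pigeonhole variables
`r_{x_i,j}` and `s_{x_i,j}`. -/
abbrev EV : Type := ℕ ⊕ (ℕ × ℕ ⊕ ℕ × ℕ)

def xvar (i : ℕ) : EV := Sum.inl i
def rvar (i j : ℕ) : EV := Sum.inr (Sum.inl (i, j))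
def svar (i j : ℕ) : EV := Sum.inr (Sum.inr (i, j))

/-- The embedded CNF `Φ'` of `(Φ, k)` (for `Φ` a CNF in the variables `x_0, …, x_{n-1}`):
`Φ` together with the pigeonhole clauses
`¬x_i ∨ r_{x_i,1} ∨ ⋯ ∨ r_{x_i,k}`, `¬x_i ∨ ¬r_{x_i,j} ∨ ¬r_{x_l,j}` (`i ≠ l`, `j < k`),
`x_i ∨ s_{x_i,1} ∨ ⋯ ∨ s_{x_i,n-k}`, and `x_i ∨ ¬s_{x_i,j} ∨ ¬s_{x_l,j}` (`i ≠ l`, `j < n-k`). -/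
def EmbeddedCNF (Φ : Set (Clause ℕ)) (n k : ℕ) : Set (Clause EV) :=
  {C | ∃ D ∈ Φ, C = D.image (fun l => (xvar l.1, l.2))} ∪
  {C | ∃ i, i < n ∧
    C = insert (xvar i, false) ((Finset.range k).image (fun j => (rvar i j, true)))} ∪
  {C | ∃ i l j, i < n ∧ l < n ∧ i ≠ l ∧ j < k ∧
    C = {(xvar i, false), (rvar i j, false), (rvar l j, false)}} ∪
  {C | ∃ i, i < n ∧
    C = insert (xvar i, true) ((Finset.range (n - k)).image (fun j => (svar i j, true)))} ∪
  {C | ∃ i l j, i < n ∧ l < n ∧ i ≠ l ∧ j < n - k ∧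
    C = {(xvar i, true), (svar i j, false), (svar l j, false)}}


namespace PHPLB
open Finset

attribute [local instance] Classical.propDecidable

/-- critical assignment determined by a hole-to-pigeon map `β` -/
def asg (n k : ℕ) (β : ℕ → ℕ) : EV → Bool
  | Sum.inl i => decide (n - k + 1 ≤ i)
  | Sum.inr (Sum.inl ij) => decide (n - k + 1 ≤ ij.1 ∧ ij.2 + (n - k + 1) = ij.1)
  | Sum.inr (Sum.inr ij) => decide (ij.2 < n - k ∧ β ij.2 = ij.1)

@[simp] lemma asg_x (n k : ℕ) (β : ℕ → ℕ) (i : ℕ) :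
    asg n k β (xvar i) = decide (n - k + 1 ≤ i) := rfl
@[simp] lemma asg_r (n k : ℕ) (β : ℕ → ℕ) (i j : ℕ) :
    asg n k β (rvar i j) = decide (n - k + 1 ≤ i ∧ j + (n - k + 1) = i) := rfl
@[simp] lemma asg_s (n k : ℕ) (β : ℕ → ℕ) (i j : ℕ) :
    asg n k β (svar i j) = decide (j < n - k ∧ β j = i) := rfl

/-- a partial matching between active pigeons and holes -/
structure Matching (n k : ℕ) (M : Finset (ℕ × ℕ)) : Prop where
  hmem : ∀ e ∈ M, e.1 ≤ n - k ∧ e.2 < n - k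
  inj1 : ∀ e ∈ M, ∀ e' ∈ M, e.1 = e'.1 → e = e'
  inj2 : ∀ e ∈ M, ∀ e' ∈ M, e.2 = e'.2 → e = e'

/-- unmatched active pigeons -/
def AP (n k : ℕ) (M : Finset (ℕ × ℕ)) : Finset ℕ :=
  range (n - k + 1) \ M.image Prod.fst

/-- unmatched holes -/
def HP (n k : ℕ) (M : Finset (ℕ × ℕ)) : Finset ℕ :=
  range (n - k) \ M.image Prod.snd

/-- `β` describes a critical assignment at stage `M`, with unmatched pigeon `p`. -/
structure Crit (n k : ℕ) (M : Finset (ℕ × ℕ)) (p : ℕ) (β : ℕ → ℕ) : Prop where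
  hp : p ∈ AP n k M
  hmem : ∀ j < n - k, β j ≤ n - k ∧ β j ≠ p
  hinj : ∀ j₁ < n - k, ∀ j₂ < n - k, β j₁ = β j₂ → j₁ = j₂
  hext : ∀ e ∈ M, β e.2 = e.1

/-- the number of critical pigeons whose assignments can falsify `C` -/
noncomputable def mu (n k : ℕ) (M : Finset (ℕ × ℕ)) (C : Clause EV) : ℕ :=
  ((AP n k M).filter
    (fun p => ∃ β, Crit n k M p β ∧ ¬ satClause (asg n k β) C)).card

lemma crit_mono {n k : ℕ} {M M' : Finset (ℕ × ℕ)} (hMM : M ⊆ M')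
    {p : ℕ} {β : ℕ → ℕ} (h : Crit n k M' p β) : Crit n k M p β := by
  refine ⟨?_, h.hmem, h.hinj, fun e he => h.hext e (hMM he)⟩
  have := h.hp
  simp only [AP, mem_sdiff, mem_range, mem_image] at this ⊢
  exact ⟨this.1, fun ⟨e, he, hee⟩ => this.2 ⟨e, hMM he, hee⟩⟩

/-- surjectivity of critical maps onto the other active pigeons -/
lemma crit_surj {n k : ℕ} {M : Finset (ℕ × ℕ)} {p : ℕ} {β : ℕ → ℕ}
    (h : Crit n k M p β) : ∀ i ≤ n - k, i ≠ p → ∃ j < n - k, β j = i := by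
  intro i hi hip
  have hsub : (range (n - k)).image β ⊆ (range (n - k + 1)).erase p := by
    intro a ha
    simp only [mem_image, mem_range] at ha
    obtain ⟨j, hj, rfl⟩ := ha
    have := h.hmem j hj
    simp only [mem_erase, mem_range]
    exact ⟨this.2, by omega⟩
  have hcard : ((range (n - k + 1)).erase p).card ≤ ((range (n - k)).image β).card := by
    rw [Finset.card_image_of_injOn (fun a ha b hb hab =>
      h.hinj a (mem_range.1 ha) b (mem_range.1 hb) hab)]
    have hp : p ∈ range (n - k + 1) := by
      have := h.hp; simp only [AP, mem_sdiff] at this; exact this.1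
    rw [Finset.card_erase_of_mem hp, Finset.card_range, Finset.card_range]
    omega
  have heq := Finset.eq_of_subset_of_card_le hsub hcard
  have : i ∈ (range (n - k + 1)).erase p := by
    simp only [mem_erase, mem_range]; exact ⟨hip, by omega⟩
  rw [← heq] at this
  simp only [mem_image, mem_range] at this
  obtain ⟨j, hj, hji⟩ := this
  exact ⟨j, hj, hji⟩

end PHPLB
namespace PHPLB
open Finset

attribute [local instance] Classical.propDecidable

/-- the big positive clause of pigeon `p` -/
def bigS (n k p : ℕ) : Clause EV :=
  insert (xvar p, true) ((range (n - k)).image (fun j => (svar p j, true)))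

/-- the only axioms falsified by a critical assignment are big `s`-clauses, and they
pin down the missing pigeon -/
lemma axiom_falsify {n k : ℕ} (hodd : Odd (n - k)) {M : Finset (ℕ × ℕ)}
    {p : ℕ} {β : ℕ → ℕ} (hc : Crit n k M p β) {C : Clause EV}
    (hC : C ∈ EmbeddedCNF (Psi n) n k)
    (hns : ¬ satClause (asg n k β) C) : C = bigS n k p := by
  obtain ⟨m, hm⟩ := hodd
  have hfal : ∀ l ∈ C, asg n k β l.1 ≠ l.2 := fun l hl he => hns ⟨l, hl, he⟩
  rcases hC with ((((⟨D, hD, rfl⟩ | ⟨i, hi, rfl⟩) | ⟨i, l, j, hi, hl, hil, hj, rfl⟩) |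
      ⟨i, hi, rfl⟩) | ⟨i, l, j, hi, hl, hil, hj, rfl⟩)
  · -- Psi clauses
    exfalso
    obtain ⟨i, hin, hD | hD⟩ := hD <;> subst hD
    · have h1 := hfal (xvar (2 * i), true) (by
        simp only [Finset.mem_image]; exact ⟨(2 * i, true), by simp, rfl⟩)
      have h2 := hfal (xvar (2 * i + 1), false) (by
        simp only [Finset.mem_image]; exact ⟨(2 * i + 1, false), by simp, rfl⟩)
      simp only [asg_x, ne_eq, decide_eq_true_eq, decide_eq_false_iff_not, not_not,
        not_le] at h1 h2
      omega
    · have h1 := hfal (xvar (2 * i + 1), true) (by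
        simp only [Finset.mem_image]; exact ⟨(2 * i + 1, true), by simp, rfl⟩)
      have h2 := hfal (xvar (2 * i), false) (by
        simp only [Finset.mem_image]; exact ⟨(2 * i, false), by simp, rfl⟩)
      simp only [asg_x, ne_eq, decide_eq_true_eq, decide_eq_false_iff_not, not_not,
        not_le] at h1 h2
      omega
  · -- big r clauses
    exfalso
    have h1 := hfal (xvar i, false) (Finset.mem_insert_self _ _)
    simp only [asg_x, ne_eq, decide_eq_false_iff_not, not_not] at h1
    have hjk : i - (n - k + 1) < k := by omega
    have h2 := hfal (rvar i (i - (n - k + 1)), true) (Finset.mem_insert_of_mem (by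
      simp only [Finset.mem_image, Finset.mem_range]
      exact ⟨i - (n - k + 1), hjk, rfl⟩))
    simp only [asg_r, ne_eq, decide_eq_true_eq, not_and] at h2
    exact h2 h1 (by omega)
  · -- r injectivity clauses
    exfalso
    have h1 := hfal (xvar i, false) (by simp)
    have h2 := hfal (rvar i j, false) (by simp)
    have h3 := hfal (rvar l j, false) (by simp)
    simp only [asg_x, asg_r, ne_eq, decide_eq_false_iff_not, not_not] at h1 h2 h3
    omega
  · -- big s clauses
    have h1 := hfal (xvar i, true) (Finset.mem_insert_self _ _)
    simp only [asg_x, ne_eq, decide_eq_true_eq, not_le] at h1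
    have hip : i = p := by
      by_contra hip
      obtain ⟨j, hjH, hji⟩ := crit_surj hc i (by omega) hip
      have h2 := hfal (svar i j, true) (Finset.mem_insert_of_mem (by
        simp only [Finset.mem_image, Finset.mem_range]; exact ⟨j, hjH, rfl⟩))
      simp only [asg_s, ne_eq, decide_eq_true_eq, not_and] at h2
      exact h2 hjH hji
    rw [hip]; rfl
  · -- s injectivity clauses
    exfalso
    have h1 := hfal (xvar i, true) (by simp)
    have h2 := hfal (svar i j, false) (by simp)
    have h3 := hfal (svar l j, false) (by simp)
    simp only [asg_x, asg_s, ne_eq, decide_eq_true_eq, not_le,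
      decide_eq_false_iff_not, not_not] at h1 h2 h3
    exact hil (h2.2 ▸ h3.2)

lemma mu_axiom_le_one {n k : ℕ} (hodd : Odd (n - k)) {M : Finset (ℕ × ℕ)}
    {C : Clause EV} (hC : C ∈ EmbeddedCNF (Psi n) n k) : mu n k M C ≤ 1 := by
  apply Finset.card_le_one.2
  intro p₁ h₁ p₂ h₂
  simp only [Finset.mem_filter] at h₁ h₂
  obtain ⟨β₁, hc₁, hs₁⟩ := h₁.2
  obtain ⟨β₂, hc₂, hs₂⟩ := h₂.2
  have e₁ := axiom_falsify hodd hc₁ hC hs₁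
  have e₂ := axiom_falsify hodd hc₂ hC hs₂
  have : (xvar p₁, true) ∈ bigS n k p₂ := by
    rw [← e₂, e₁]; exact Finset.mem_insert_self _ _
  simp only [bigS, Finset.mem_insert, Finset.mem_image, Prod.mk.injEq, xvar, svar] at this
  rcases this with ⟨h, -⟩ | ⟨j, -, h, -⟩
  · exact Sum.inl.inj h
  · exact absurd h (by simp)

lemma mu_res {n k : ℕ} {M : Finset (ℕ × ℕ)} {x : EV} {P Q : Clause EV} :
    mu n k M (P ∪ Q) ≤ mu n k M (insert (x, true) P) + mu n k M (insert (x, false) Q) := by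
  classical
  refine le_trans (Finset.card_le_card ?_) (Finset.card_union_le _ _)
  intro p hp
  simp only [Finset.mem_filter, Finset.mem_union] at hp ⊢
  obtain ⟨hpa, β, hc, hns⟩ := hp
  have hP : ¬ satClause (asg n k β) P := fun ⟨l, hl, he⟩ => hns ⟨l, Finset.mem_union_left _ hl, he⟩
  have hQ : ¬ satClause (asg n k β) Q := fun ⟨l, hl, he⟩ => hns ⟨l, Finset.mem_union_right _ hl, he⟩
  by_cases hx : asg n k β x = true
  · right
    exact ⟨hpa, β, hc, fun ⟨l, hl, he⟩ => by
      rcases Finset.mem_insert.1 hl with rfl | hl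
      · simp_all
      · exact hQ ⟨l, hl, he⟩⟩
  · left
    exact ⟨hpa, β, hc, fun ⟨l, hl, he⟩ => by
      rcases Finset.mem_insert.1 hl with rfl | hl
      · simp_all
      · exact hP ⟨l, hl, he⟩⟩

lemma mu_weak {n k : ℕ} {M : Finset (ℕ × ℕ)} {lit : EV × Bool} {C : Clause EV} :
    mu n k M (insert lit C) ≤ mu n k M C := by
  apply Finset.card_le_card
  intro p hp
  simp only [Finset.mem_filter] at hp ⊢
  obtain ⟨hpa, β, hc, hns⟩ := hp
  exact ⟨hpa, β, hc, fun ⟨l, hl, he⟩ => hns ⟨l, Finset.mem_insert_of_mem hl, he⟩⟩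

end PHPLB
namespace PHPLB
open Finset

attribute [local instance] Classical.propDecidable

lemma card_image_fst {n k : ℕ} {M : Finset (ℕ × ℕ)} (hM : Matching n k M) :
    (M.image Prod.fst).card = M.card :=
  Finset.card_image_of_injOn (fun a ha b hb hab => hM.inj1 a ha b hb hab)

lemma card_image_snd {n k : ℕ} {M : Finset (ℕ × ℕ)} (hM : Matching n k M) :
    (M.image Prod.snd).card = M.card :=
  Finset.card_image_of_injOn (fun a ha b hb hab => hM.inj2 a ha b hb hab)

lemma card_le_matching {n k : ℕ} {M : Finset (ℕ × ℕ)} (hM : Matching n k M) :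
    M.card ≤ n - k := by
  rw [← card_image_snd hM]
  have : M.image Prod.snd ⊆ range (n - k) := by
    intro a ha
    simp only [mem_image] at ha
    obtain ⟨e, he, rfl⟩ := ha
    exact mem_range.2 (hM.hmem e he).2
  simpa using Finset.card_le_card this

lemma card_AP {n k : ℕ} {M : Finset (ℕ × ℕ)} (hM : Matching n k M) :
    (AP n k M).card = n - k + 1 - M.card := by
  rw [AP, Finset.card_sdiff_of_subset, card_range, card_image_fst hM]
  intro a ha
  simp only [mem_image] at ha
  obtain ⟨e, he, rfl⟩ := ha
  exact mem_range.2 (by have := (hM.hmem e he).1; omega)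

lemma card_HP {n k : ℕ} {M : Finset (ℕ × ℕ)} (hM : Matching n k M) :
    (HP n k M).card = n - k - M.card := by
  rw [HP, Finset.card_sdiff_of_subset, card_range, card_image_snd hM]
  intro a ha
  simp only [mem_image] at ha
  obtain ⟨e, he, rfl⟩ := ha
  exact mem_range.2 (hM.hmem e he).2

lemma crit_exists {n k : ℕ} {M : Finset (ℕ × ℕ)} (hM : Matching n k M)
    {p : ℕ} (hp : p ∈ AP n k M) : ∃ β, Crit n k M p β := by
  have hcards : (HP n k M).card = ((AP n k M).erase p).card := by
    rw [card_HP hM, Finset.card_erase_of_mem hp, card_AP hM]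
    have := card_le_matching hM
    omega
  let e := Finset.equivOfCardEq hcards
  set β : ℕ → ℕ := fun j =>
    if hj : j ∈ HP n k M then (e ⟨j, hj⟩ : ℕ)
    else if hm : ∃ a, (a, j) ∈ M then hm.choose else 0 with hβ
  have hpAP : p ∉ M.image Prod.fst := by
    have := hp; simp only [AP, mem_sdiff] at this; exact this.2
  have hval : ∀ j, (hj : j ∈ HP n k M) → β j ∈ (AP n k M).erase p := by
    intro j hj
    simp only [hβ, dif_pos hj]
    exact (e ⟨j, hj⟩).2
  have hmval : ∀ j (hm : ∃ a, (a, j) ∈ M), j ∉ HP n k M → (β j, j) ∈ M := by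
    intro j hm hj
    simp only [hβ, dif_neg hj, dif_pos hm]
    exact hm.choose_spec
  have hcase : ∀ j < n - k, j ∉ HP n k M → ∃ a, (a, j) ∈ M := by
    intro j hjnk hj
    simp only [HP, mem_sdiff, mem_range, not_and, not_not] at hj
    obtain ⟨ee, hee, he2⟩ := Finset.mem_image.1 (hj hjnk)
    subst he2
    exact ⟨ee.1, by simpa using hee⟩
  refine ⟨β, hp, ?_, ?_, ?_⟩
  · intro j hj
    by_cases hjh : j ∈ HP n k M
    · have := hval j hjh
      simp only [mem_erase, AP, mem_sdiff, mem_range] at this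
      exact ⟨by omega, this.1⟩
    · have hm := hcase j hj hjh
      have := hmval j hm hjh
      refine ⟨(hM.hmem _ this).1, fun hc => hpAP ?_⟩
      exact Finset.mem_image.2 ⟨(β j, j), this, hc ▸ rfl⟩
  · intro j₁ h₁ j₂ h₂ hbeq
    by_cases hj1 : j₁ ∈ HP n k M <;> by_cases hj2 : j₂ ∈ HP n k M
    · have : e ⟨j₁, hj1⟩ = e ⟨j₂, hj2⟩ := by
        apply Subtype.coe_injective
        simpa only [hβ, dif_pos hj1, dif_pos hj2] using hbeq
      exact congrArg Subtype.val (e.injective this)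
    · exfalso
      have h1 := hval j₁ hj1
      have h2 := hmval j₂ (hcase j₂ h₂ hj2) hj2
      rw [hbeq] at h1
      have : β j₂ ∈ M.image Prod.fst := Finset.mem_image.2 ⟨_, h2, rfl⟩
      have h1' := Finset.mem_of_mem_erase h1
      simp only [AP, mem_sdiff] at h1'
      exact h1'.2 this
    · exfalso
      have h1 := hval j₂ hj2
      have h2 := hmval j₁ (hcase j₁ h₁ hj1) hj1
      rw [← hbeq] at h1
      have : β j₁ ∈ M.image Prod.fst := Finset.mem_image.2 ⟨_, h2, rfl⟩
      have h1' := Finset.mem_of_mem_erase h1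
      simp only [AP, mem_sdiff] at h1'
      exact h1'.2 this
    · have h1 := hmval j₁ (hcase j₁ h₁ hj1) hj1
      have h2 := hmval j₂ (hcase j₂ h₂ hj2) hj2
      have := hM.inj1 _ h1 _ h2 hbeq
      exact congrArg Prod.snd this
  · intro ee hee
    have hj : ee.2 ∉ HP n k M := by
      simp only [HP, mem_sdiff, not_and, not_not]
      exact fun _ => Finset.mem_image.2 ⟨ee, hee, rfl⟩
    have h1 := hmval ee.2 ⟨ee.1, by simpa using hee⟩ hj
    have := hM.inj2 _ h1 _ (by simpa using hee : (ee.1, ee.2) ∈ M) rfl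
    exact congrArg Prod.fst this

lemma mu_empty {n k : ℕ} {M : Finset (ℕ × ℕ)} (hM : Matching n k M) :
    mu n k M (∅ : Clause EV) = (AP n k M).card := by
  rw [mu]
  congr 1
  apply Finset.filter_true_of_mem
  intro p hp
  obtain ⟨β, hβ⟩ := crit_exists hM hp
  exact ⟨β, hβ, by simp [satClause]⟩

end PHPLB
namespace PHPLB
open Finset

attribute [local instance] Classical.propDecidable

variable {n k : ℕ}

/-- every refutation contains a clause of medium complexity -/
lemma medium (hodd : Odd (n - k)) {M : Finset (ℕ × ℕ)} (hM : Matching n k M)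
    (hT4 : 4 ≤ (AP n k M).card) (π : ResRefutation (EmbeddedCNF (Psi n) n k)) :
    ∃ i < π.seq.length, (AP n k M).card ≤ 3 * mu n k M (π.seq.getD i ∅) ∧
      3 * mu n k M (π.seq.getD i ∅) ≤ 2 * (AP n k M).card := by
  have hlen : 0 < π.seq.length := List.length_pos_iff.2 π.ne
  have hlast : π.seq.getD (π.seq.length - 1) ∅ = (∅ : Clause EV) := by
    rw [List.getD_eq_getElem π.seq ∅ (by omega), ← List.getLast_eq_getElem π.ne,
      π.lastEmpty]
  have hP : ∃ i, i < π.seq.length ∧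
      (AP n k M).card ≤ 3 * mu n k M (π.seq.getD i ∅) := by
    refine ⟨π.seq.length - 1, by omega, ?_⟩
    rw [hlast, mu_empty hM]; omega
  obtain ⟨hi₀len, hi₀T⟩ := Nat.find_spec hP
  have hmin : ∀ j < Nat.find hP, 3 * mu n k M (π.seq.getD j ∅) < (AP n k M).card := by
    intro j hj
    have := Nat.find_min hP hj
    by_contra hcon
    exact this ⟨by omega, by omega⟩
  refine ⟨Nat.find hP, hi₀len, hi₀T, ?_⟩
  rcases π.valid (Nat.find hP) hi₀len with hax | ⟨j, l, hj, hl, x, P, Q, hPj, hQl, hiPQ⟩ |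
      ⟨j, hj, lit, hwk⟩
  · have := mu_axiom_le_one (M := M) hodd hax
    rw [← List.getD_eq_getElem π.seq ∅ hi₀len] at this
    omega
  · have e1 : π.seq.getD (Nat.find hP) ∅ = P ∪ Q := by
      rw [List.getD_eq_getElem π.seq ∅ hi₀len, hiPQ]
    have e2 : π.seq.getD j ∅ = insert (x, true) P := by
      rw [List.getD_eq_getElem π.seq ∅ (hj.trans hi₀len), hPj]
    have e3 : π.seq.getD l ∅ = insert (x, false) Q := by
      rw [List.getD_eq_getElem π.seq ∅ (hl.trans hi₀len), hQl]
    have hsub : mu n k M (π.seq.getD (Nat.find hP) ∅) ≤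
        mu n k M (π.seq.getD j ∅) + mu n k M (π.seq.getD l ∅) := by
      rw [e1, e2, e3]; exact mu_res
    have h1 := hmin j hj
    have h2 := hmin l hl
    omega
  · have e1 : π.seq.getD (Nat.find hP) ∅ = insert lit (π.seq.getD j ∅) := by
      rw [List.getD_eq_getElem π.seq ∅ hi₀len, hwk,
        List.getD_eq_getElem π.seq ∅ (hj.trans hi₀len)]
    have h1 := hmin j hj
    have h2 : mu n k M (π.seq.getD (Nat.find hP) ∅) ≤ mu n k M (π.seq.getD j ∅) := by
      rw [e1]; exact mu_weak
    omega

end PHPLB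
namespace PHPLB
open Finset

attribute [local instance] Classical.propDecidable

variable {n k : ℕ}

/-- the monotone pairs of a clause -/
noncomputable def MP (n k : ℕ) (M : Finset (ℕ × ℕ)) (C : Clause EV) : Finset (ℕ × ℕ) :=
  ((AP n k M) ×ˢ (HP n k M)).filter
    (fun pj => (svar pj.1 pj.2, true) ∈ C ∨
      ∃ l ∈ AP n k M, l ≠ pj.1 ∧ (svar l pj.2, false) ∈ C)

/-- a clause is dead at stage `M` if all critical assignments satisfy it -/
def Dead (n k : ℕ) (M : Finset (ℕ × ℕ)) (C : Clause EV) : Prop :=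
  ∀ p β, Crit n k M p β → satClause (asg n k β) C

lemma hp_of_crit {M : Finset (ℕ × ℕ)} {p : ℕ} {β : ℕ → ℕ}
    (hc : Crit n k M p β) {j : ℕ} (hjH : j < n - k) {q : ℕ}
    (hbj : β j = q) (hq : q ∈ AP n k M) : j ∈ HP n k M := by
  simp only [HP, mem_sdiff, mem_range]
  refine ⟨hjH, fun hmem => ?_⟩
  obtain ⟨e, he, he2⟩ := Finset.mem_image.1 hmem
  have h3 := hc.hext e he
  rw [he2, hbj] at h3
  simp only [AP, mem_sdiff] at hq
  exact hq.2 (Finset.mem_image.2 ⟨e, he, h3.symm ▸ rfl⟩)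

lemma swap_mem_MP {M : Finset (ℕ × ℕ)} {p q : ℕ} {β : ℕ → ℕ} {C : Clause EV}
    (hc : Crit n k M p β) (hns : ¬ satClause (asg n k β) C)
    (hq : q ∈ AP n k M) (hqp : q ≠ p)
    (hqd : ∀ β', Crit n k M q β' → satClause (asg n k β') C)
    {j : ℕ} (hjH : j < n - k) (hbj : β j = q) : (p, j) ∈ MP n k M C := by
  have hjHP : j ∈ HP n k M := hp_of_crit hc hjH hbj hq
  have hpH : p ≤ n - k := by
    have := hc.hp; simp only [AP, mem_sdiff, mem_range] at this; omega
  set β' : ℕ → ℕ := Function.update β j p with hβ'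
  have hcrit' : Crit n k M q β' := by
    refine ⟨hq, ?_, ?_, ?_⟩
    · intro j' hj'
      by_cases hjj : j' = j
      · subst hjj
        simp only [hβ', Function.update_self]
        exact ⟨hpH, fun h => hqp h.symm⟩
      · simp only [hβ', Function.update_of_ne hjj]
        refine ⟨(hc.hmem j' hj').1, fun h => hjj ?_⟩
        exact hc.hinj j' hj' j hjH (by rw [h, hbj])
    · intro j₁ h₁ j₂ h₂ heq
      by_cases e₁ : j₁ = j <;> by_cases e₂ : j₂ = j
      · omega
      · exfalso
        subst e₁
        simp only [hβ', Function.update_self, Function.update_of_ne e₂] at heq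
        exact (hc.hmem j₂ h₂).2 heq.symm
      · exfalso
        subst e₂
        simp only [hβ', Function.update_self, Function.update_of_ne e₁] at heq
        exact (hc.hmem j₁ h₁).2 heq
      · simp only [hβ', Function.update_of_ne e₁, Function.update_of_ne e₂] at heq
        exact hc.hinj j₁ h₁ j₂ h₂ heq
    · intro e he
      have hne : e.2 ≠ j := by
        intro h
        simp only [HP, mem_sdiff] at hjHP
        exact hjHP.2 (Finset.mem_image.2 ⟨e, he, h⟩)
      simp only [hβ', Function.update_of_ne hne]
      exact hc.hext e he
  obtain ⟨⟨v, b⟩, hlit, hsat⟩ := hqd β' hcrit'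
  have hlitns : ¬ (asg n k β (v, b).1 = (v, b).2) := fun h => hns ⟨(v, b), hlit, h⟩
  simp only at hsat hlitns
  rcases v with i | (⟨i, j''⟩ | ⟨i, j''⟩)
  · exact absurd hsat (by simpa [asg] using hlitns)
  · exact absurd hsat (by simpa [asg] using hlitns)
  · by_cases hjj : j'' = j
    · subst hjj
      have hβval : asg n k β' (Sum.inr (Sum.inr (i, j''))) =
          decide (j'' < n - k ∧ p = i) := by
        simp [asg, hβ', Function.update_self]
      have hβold : asg n k β (Sum.inr (Sum.inr (i, j''))) =
          decide (j'' < n - k ∧ q = i) := by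
        simp [asg, hbj]
      cases b with
      | false =>
        rw [hβval] at hsat
        rw [hβold] at hlitns
        simp only [decide_eq_false_iff_not, not_and] at hsat
        have h2 : (j'' < n - k ∧ q = i) := by
          by_contra hcon
          exact hlitns (by simp [hcon])
        obtain ⟨hj''H, rfl⟩ := h2
        simp only [MP, mem_filter, mem_product]
        exact ⟨⟨hc.hp, hjHP⟩, Or.inr ⟨q, hq, hqp, hlit⟩⟩
      | true =>
        rw [hβval] at hsat
        simp only [decide_eq_true_eq] at hsat
        obtain ⟨hj''H, rfl⟩ := hsat
        simp only [MP, mem_filter, mem_product]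
        exact ⟨⟨hc.hp, hjHP⟩, Or.inl hlit⟩
    · exfalso
      have heq2 : asg n k β' (Sum.inr (Sum.inr (i, j''))) =
          asg n k β (Sum.inr (Sum.inr (i, j''))) := by
        simp [asg, hβ', Function.update_of_ne hjj]
      rw [heq2] at hsat
      exact hlitns hsat

end PHPLB
namespace PHPLB
open Finset

attribute [local instance] Classical.propDecidable

variable {n k : ℕ}

lemma alg_med {μ T : ℕ} (h1 : T ≤ 3 * μ) (h2 : 3 * μ ≤ 2 * T) :
    2 * T ^ 2 ≤ 9 * (μ * (T - μ)) := by
  have hμT : μ ≤ T := by omega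
  zify [hμT]
  nlinarith [mul_nonneg (by linarith : (0:ℤ) ≤ 3 * (μ:ℤ) - T)
    (by linarith : (0:ℤ) ≤ 2 * (T:ℤ) - 3 * μ)]

/-- the width lower bound for medium clauses -/
lemma mp_lower {M : Finset (ℕ × ℕ)} {C : Clause EV} :
    mu n k M C * ((AP n k M).card - mu n k M C) ≤ (MP n k M C).card := by
  classical
  set Pg := (AP n k M).filter
    (fun p => ∃ β, Crit n k M p β ∧ ¬ satClause (asg n k β) C) with hPg
  have hPgsub : Pg ⊆ AP n k M := Finset.filter_subset _ _
  have hfiber : ∀ p ∈ Pg,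
      (AP n k M).card - Pg.card ≤ ((MP n k M C).filter (fun pj => pj.1 = p)).card := by
    intro p hp
    obtain ⟨β, hc, hns⟩ := (Finset.mem_filter.1 hp).2
    have hpPg := hp
    set Q := AP n k M \ Pg with hQ
    have hQcard : Q.card = (AP n k M).card - Pg.card := Finset.card_sdiff_of_subset hPgsub
    set f : ℕ → ℕ × ℕ := fun q =>
      (p, if h : ∃ j, j < n - k ∧ β j = q then h.choose else 0) with hf
    have hspec : ∀ q ∈ Q, ∃ hq : (∃ j, j < n - k ∧ β j = q),
        (f q).2 = hq.choose := by
      intro q hqQ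
      simp only [hQ, mem_sdiff] at hqQ
      have hqAP := hqQ.1
      have hqp : q ≠ p := by
        intro h; exact hqQ.2 (h ▸ hpPg)
      have hqle : q ≤ n - k := by
        simp only [AP, mem_sdiff, mem_range] at hqAP; omega
      obtain ⟨j, hj, hbj⟩ := crit_surj hc q hqle hqp
      refine ⟨⟨j, hj, hbj⟩, ?_⟩
      exact dif_pos _
    have hmaps : ∀ q ∈ Q, f q ∈ (MP n k M C).filter (fun pj => pj.1 = p) := by
      intro q hqQ
      obtain ⟨hex, hval⟩ := hspec q hqQ
      obtain ⟨hjlt, hbj⟩ := hex.choose_spec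
      simp only [hQ, mem_sdiff] at hqQ
      have hqAP := hqQ.1
      have hqp : q ≠ p := fun h => hqQ.2 (h ▸ hpPg)
      have hqd : ∀ β', Crit n k M q β' → satClause (asg n k β') C := by
        intro β' hc'
        by_contra hns'
        exact hqQ.2 (Finset.mem_filter.2 ⟨hqAP, β', hc', hns'⟩)
      have hfq : f q = (p, hex.choose) := by rw [← hval]
      rw [mem_filter, hfq]
      exact ⟨swap_mem_MP hc hns hqAP hqp hqd hjlt hbj, rfl⟩
    have hinj : Set.InjOn f Q := by
      intro q₁ h₁ q₂ h₂ heq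
      obtain ⟨hex₁, hv₁⟩ := hspec q₁ h₁
      obtain ⟨hex₂, hv₂⟩ := hspec q₂ h₂
      have : (f q₁).2 = (f q₂).2 := by rw [heq]
      rw [hv₁, hv₂] at this
      have e₁ := hex₁.choose_spec.2
      have e₂ := hex₂.choose_spec.2
      rw [← e₁, ← e₂, this]
    have := Finset.card_le_card_of_injOn f hmaps hinj
    omega
  have hdisj : ∀ p₁ ∈ Pg, ∀ p₂ ∈ Pg, p₁ ≠ p₂ →
      Disjoint ((MP n k M C).filter (fun pj => pj.1 = p₁))
        ((MP n k M C).filter (fun pj => pj.1 = p₂)) := by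
    intro p₁ _ p₂ _ hne
    apply Finset.disjoint_left.2
    intro pj h₁ h₂
    simp only [mem_filter] at h₁ h₂
    exact hne (h₁.2 ▸ h₂.2 ▸ rfl)
  calc mu n k M C * ((AP n k M).card - mu n k M C)
      = ∑ _p ∈ Pg, ((AP n k M).card - Pg.card) := by
        rw [Finset.sum_const, smul_eq_mul, mu]
    _ ≤ ∑ p ∈ Pg, ((MP n k M C).filter (fun pj => pj.1 = p)).card :=
        Finset.sum_le_sum hfiber
    _ = (Pg.biUnion (fun p => (MP n k M C).filter (fun pj => pj.1 = p))).card :=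
        (Finset.card_biUnion hdisj).symm
    _ ≤ (MP n k M C).card := Finset.card_le_card (by
        intro pj hpj
        obtain ⟨p, _, hmem⟩ := Finset.mem_biUnion.1 hpj
        exact (Finset.mem_filter.1 hmem).1)

lemma AP_mono {M M' : Finset (ℕ × ℕ)} (h : M ⊆ M') : AP n k M' ⊆ AP n k M :=
  Finset.sdiff_subset_sdiff (le_refl _) (Finset.image_subset_image h)

lemma HP_mono {M M' : Finset (ℕ × ℕ)} (h : M ⊆ M') : HP n k M' ⊆ HP n k M :=
  Finset.sdiff_subset_sdiff (le_refl _) (Finset.image_subset_image h)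

lemma MP_mono {M M' : Finset (ℕ × ℕ)} (h : M ⊆ M') {C : Clause EV} :
    MP n k M' C ⊆ MP n k M C := by
  intro pj hpj
  simp only [MP, mem_filter, mem_product] at hpj ⊢
  obtain ⟨⟨h1, h2⟩, h3 | ⟨l, hl, hlne, hlC⟩⟩ := hpj
  · exact ⟨⟨AP_mono h h1, HP_mono h h2⟩, Or.inl h3⟩
  · exact ⟨⟨AP_mono h h1, HP_mono h h2⟩, Or.inr ⟨l, AP_mono h hl, hlne, hlC⟩⟩

lemma Dead_mono {M M' : Finset (ℕ × ℕ)} (h : M ⊆ M') {C : Clause EV}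
    (hd : Dead n k M C) : Dead n k M' C :=
  fun p β hc => hd p β (crit_mono h hc)

/-- hitting a monotone pair kills the clause -/
lemma kill {M : Finset (ℕ × ℕ)} {C : Clause EV} {pr : ℕ × ℕ}
    (hpr : pr ∈ MP n k M C) : Dead n k (insert pr M) C := by
  intro p β hc
  have hext := hc.hext pr (Finset.mem_insert_self _ _)
  simp only [MP, mem_filter, mem_product] at hpr
  obtain ⟨⟨h1, h2⟩, h3 | ⟨l, hl, hlne, hlC⟩⟩ := hpr
  · refine ⟨(svar pr.1 pr.2, true), h3, ?_⟩
    simp only [asg_s, decide_eq_true_eq]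
    simp only [HP, mem_sdiff, mem_range] at h2
    exact ⟨h2.1, hext⟩
  · refine ⟨(svar l pr.2, false), hlC, ?_⟩
    simp only [asg_s, decide_eq_false_iff_not, not_and]
    intro _
    rw [hext]
    exact fun h => hlne h.symm

end PHPLB
namespace PHPLB
open Finset

attribute [local instance] Classical.propDecidable

variable {n k : ℕ}

/-- the fat clauses of the refutation at stage `M` -/
noncomputable def FAT (n k : ℕ) (M : Finset (ℕ × ℕ))
    (π : ResRefutation (EmbeddedCNF (Psi n) n k)) : Finset ℕ :=
  (range π.seq.length).filter (fun i =>
    ¬ Dead n k M (π.seq.getD i ∅) ∧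
    (n - k + 1) * (n - k) ≤ 14 * (MP n k M (π.seq.getD i ∅)).card)

lemma fat_nonempty (hodd : Odd (n - k)) {M : Finset (ℕ × ℕ)} (hM : Matching n k M)
    (π : ResRefutation (EmbeddedCNF (Psi n) n k))
    (hT4 : 4 ≤ (AP n k M).card)
    (h28 : 9 * ((n - k + 1) * (n - k)) ≤ 28 * (AP n k M).card ^ 2) :
    (FAT n k M π).Nonempty := by
  obtain ⟨i, hilen, hlo, hhi⟩ := medium hodd hM hT4 π
  refine ⟨i, ?_⟩
  simp only [FAT, mem_filter, mem_range]
  refine ⟨hilen, ?_, ?_⟩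
  · intro hd
    have hpos : 0 < mu n k M (π.seq.getD i ∅) := by omega
    obtain ⟨p, hp⟩ := Finset.card_pos.1 hpos
    obtain ⟨-, β, hc, hns⟩ := Finset.mem_filter.1 hp
    exact hns (hd p β hc)
  · have halg := alg_med hlo hhi
    have hmplo := mp_lower (n := n) (k := k) (M := M) (C := π.seq.getD i ∅)
    have h9 : 2 * (AP n k M).card ^ 2 ≤ 9 * (MP n k M (π.seq.getD i ∅)).card :=
      le_trans halg (Nat.mul_le_mul_left 9 hmplo)
    omega

lemma kill_step {M : Finset (ℕ × ℕ)} (hM : Matching n k M)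
    (π : ResRefutation (EmbeddedCNF (Psi n) n k)) (hH : 0 < n - k)
    (hne : (FAT n k M π).Nonempty) :
    ∃ M', Matching n k M' ∧ M'.card = M.card + 1 ∧
      14 * (FAT n k M' π).card ≤ 13 * (FAT n k M π).card := by
  classical
  set G := (n - k + 1) * (n - k) with hG
  set grid := (AP n k M) ×ˢ (HP n k M) with hgrid
  have hMPgrid : ∀ i, MP n k M (π.seq.getD i ∅) ⊆ grid := fun i => Finset.filter_subset _ _
  have hcardMP : ∀ i, (MP n k M (π.seq.getD i ∅)).card =
      ∑ c ∈ grid, (if c ∈ MP n k M (π.seq.getD i ∅) then 1 else 0) := by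
    intro i
    rw [← Finset.sum_filter, Finset.sum_const, smul_eq_mul, mul_one]
    congr 1
    ext c
    simp only [mem_filter]
    exact ⟨fun h => ⟨hMPgrid i h, h⟩, fun h => h.2⟩
  have hswap : ∑ i ∈ FAT n k M π, (MP n k M (π.seq.getD i ∅)).card =
      ∑ c ∈ grid, ((FAT n k M π).filter (fun i => c ∈ MP n k M (π.seq.getD i ∅))).card := by
    calc ∑ i ∈ FAT n k M π, (MP n k M (π.seq.getD i ∅)).card
        = ∑ i ∈ FAT n k M π, ∑ c ∈ grid, (if c ∈ MP n k M (π.seq.getD i ∅) then 1 else 0) :=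
          Finset.sum_congr rfl (fun i _ => hcardMP i)
      _ = ∑ c ∈ grid, ∑ i ∈ FAT n k M π, (if c ∈ MP n k M (π.seq.getD i ∅) then 1 else 0) :=
          Finset.sum_comm
      _ = ∑ c ∈ grid, ((FAT n k M π).filter (fun i => c ∈ MP n k M (π.seq.getD i ∅))).card :=
          Finset.sum_congr rfl (fun c _ => (Finset.card_filter _ _).symm)
  have hlower : (FAT n k M π).card * G ≤
      14 * ∑ i ∈ FAT n k M π, (MP n k M (π.seq.getD i ∅)).card := by
    rw [Finset.mul_sum]
    calc (FAT n k M π).card * G = ∑ _i ∈ FAT n k M π, G := by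
          rw [Finset.sum_const, smul_eq_mul]
      _ ≤ ∑ i ∈ FAT n k M π, 14 * (MP n k M (π.seq.getD i ∅)).card := by
          refine Finset.sum_le_sum (fun i hi => ?_)
          have := (Finset.mem_filter.1 hi).2.2
          exact this
  have hGpos : 0 < G := by
    rw [hG]
    exact Nat.mul_pos (by omega) hH
  have hgridne : grid.Nonempty := by
    obtain ⟨i₀, hi₀⟩ := hne
    have hfat := (Finset.mem_filter.1 hi₀).2.2
    have hApos : 0 < (n - k + 1) * (n - k) := Nat.mul_pos (by omega) hH
    have h14 : 0 < 14 * (MP n k M (π.seq.getD i₀ ∅)).card := lt_of_lt_of_le hApos hfat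
    have : 0 < (MP n k M (π.seq.getD i₀ ∅)).card := by omega
    obtain ⟨c, hc⟩ := Finset.card_pos.1 this
    exact ⟨c, hMPgrid i₀ hc⟩
  obtain ⟨cm, hcm, hcmax⟩ := Finset.exists_max_image grid
    (fun c => ((FAT n k M π).filter (fun i => c ∈ MP n k M (π.seq.getD i ∅))).card) hgridne
  set h : ℕ := ((FAT n k M π).filter (fun i => cm ∈ MP n k M (π.seq.getD i ∅))).card with hh
  have hsumle : ∑ c ∈ grid, ((FAT n k M π).filter (fun i => c ∈ MP n k M (π.seq.getD i ∅))).card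
      ≤ grid.card * h := by
    calc _ ≤ ∑ _c ∈ grid, h := Finset.sum_le_sum (fun c hc => hcmax c hc)
      _ = grid.card * h := by rw [Finset.sum_const, smul_eq_mul]
  have hgridcard : grid.card ≤ G := by
    rw [hgrid, Finset.card_product, hG]
    have h1 : (AP n k M).card ≤ n - k + 1 := by
      have : AP n k M ⊆ range (n - k + 1) := Finset.sdiff_subset
      simpa using Finset.card_le_card this
    have h2 : (HP n k M).card ≤ n - k := by
      have : HP n k M ⊆ range (n - k) := Finset.sdiff_subset
      simpa using Finset.card_le_card this
    exact Nat.mul_le_mul h1 h2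
  have hFh : (FAT n k M π).card ≤ 14 * h := by
    have hc1 : (FAT n k M π).card * G ≤ 14 * (grid.card * h) := by
      calc (FAT n k M π).card * G ≤ 14 * ∑ i ∈ FAT n k M π, (MP n k M (π.seq.getD i ∅)).card :=
            hlower
        _ = 14 * ∑ c ∈ grid, ((FAT n k M π).filter (fun i => c ∈ MP n k M (π.seq.getD i ∅))).card := by
            rw [hswap]
        _ ≤ 14 * (grid.card * h) := Nat.mul_le_mul_left 14 hsumle
    have hc2 : (FAT n k M π).card * G ≤ (14 * h) * G := by
      calc (FAT n k M π).card * G ≤ 14 * (grid.card * h) := hc1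
        _ ≤ 14 * (G * h) := Nat.mul_le_mul_left 14 (Nat.mul_le_mul_right h hgridcard)
        _ = (14 * h) * G := by ring
    exact Nat.le_of_mul_le_mul_right hc2 hGpos
  -- insert the chosen pair
  have hcmAP : cm.1 ∈ AP n k M ∧ cm.2 ∈ HP n k M := by
    rw [hgrid] at hcm
    exact Finset.mem_product.1 hcm
  have hcmnotM : cm ∉ M := by
    intro hmem
    have := hcmAP.1
    simp only [AP, mem_sdiff] at this
    exact this.2 (Finset.mem_image.2 ⟨cm, hmem, rfl⟩)
  refine ⟨insert cm M, ?_, ?_, ?_⟩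
  · constructor
    · intro e he
      rcases Finset.mem_insert.1 he with rfl | he
      · constructor
        · have := hcmAP.1; simp only [AP, mem_sdiff, mem_range] at this; omega
        · have := hcmAP.2; simp only [HP, mem_sdiff, mem_range] at this; exact this.1
      · exact hM.hmem e he
    · intro e he e' he' heq
      rcases Finset.mem_insert.1 he with he1 | he1 <;>
        rcases Finset.mem_insert.1 he' with he2 | he2
      · rw [he1, he2]
      · exfalso
        have hcm1 := hcmAP.1
        simp only [AP, mem_sdiff] at hcm1
        exact hcm1.2 (Finset.mem_image.2 ⟨e', he2, by rw [← heq, he1]⟩)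
      · exfalso
        have hcm1 := hcmAP.1
        simp only [AP, mem_sdiff] at hcm1
        exact hcm1.2 (Finset.mem_image.2 ⟨e, he1, by rw [heq, he2]⟩)
      · exact hM.inj1 e he1 e' he2 heq
    · intro e he e' he' heq
      rcases Finset.mem_insert.1 he with he1 | he1 <;>
        rcases Finset.mem_insert.1 he' with he2 | he2
      · rw [he1, he2]
      · exfalso
        have hcm1 := hcmAP.2
        simp only [HP, mem_sdiff] at hcm1
        exact hcm1.2 (Finset.mem_image.2 ⟨e', he2, by rw [← heq, he1]⟩)
      · exfalso
        have hcm1 := hcmAP.2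
        simp only [HP, mem_sdiff] at hcm1
        exact hcm1.2 (Finset.mem_image.2 ⟨e, he1, by rw [heq, he2]⟩)
      · exact hM.inj2 e he1 e' he2 heq
  · rw [Finset.card_insert_of_notMem hcmnotM]
  · have hsubM : M ⊆ insert cm M := Finset.subset_insert _ _
    have hsub : FAT n k (insert cm M) π ⊆
        (FAT n k M π) \ ((FAT n k M π).filter (fun i => cm ∈ MP n k M (π.seq.getD i ∅))) := by
      intro i hi
      simp only [FAT, mem_filter, mem_range] at hi
      obtain ⟨hlen, hnd, hGle⟩ := hi
      have hiF : i ∈ FAT n k M π := by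
        simp only [FAT, mem_filter, mem_range]
        refine ⟨hlen, fun hd => hnd (Dead_mono hsubM hd), ?_⟩
        exact le_trans hGle (Nat.mul_le_mul_left 14
          (Finset.card_le_card (MP_mono hsubM)))
      simp only [mem_sdiff, mem_filter]
      refine ⟨hiF, fun hhit => ?_⟩
      exact hnd (kill hhit.2)
    have hcards : (FAT n k (insert cm M) π).card ≤ (FAT n k M π).card - h := by
      have := Finset.card_le_card hsub
      rwa [Finset.card_sdiff_of_subset (Finset.filter_subset _ _)] at this
    omega

/-- the main stage induction -/
lemma stage (hodd : Odd (n - k)) (hH : 37 ≤ n - k)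
    (π : ResRefutation (EmbeddedCNF (Psi n) n k)) :
    ∀ t, t ≤ (n - k) / 3 → ∃ M, Matching n k M ∧ M.card = t ∧
      14 ^ t * (FAT n k M π).card ≤ 13 ^ t * π.seq.length := by
  intro t
  induction t with
  | zero =>
    intro _
    refine ⟨∅, ⟨by simp, by simp, by simp⟩, by simp, ?_⟩
    simp only [pow_zero, one_mul]
    exact Finset.card_filter_le _ _ |>.trans (by simp)
  | succ t ih =>
    intro ht
    obtain ⟨M, hM, hcard, hbound⟩ := ih (by omega)
    have hTcard : (AP n k M).card = n - k + 1 - t := by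
      rw [card_AP hM, hcard]
    have h3t : 3 * t ≤ n - k := by omega
    have hT4 : 4 ≤ (AP n k M).card := by omega
    have h3T : 2 * (n - k) + 3 ≤ 3 * (AP n k M).card := by omega
    have h28 : 9 * ((n - k + 1) * (n - k)) ≤ 28 * (AP n k M).card ^ 2 := by
      have hsq : (2 * (n - k) + 3) * (2 * (n - k) + 3) ≤
          (3 * (AP n k M).card) * (3 * (AP n k M).card) := Nat.mul_le_mul h3T h3T
      nlinarith [hsq]
    have hne := fat_nonempty hodd hM π hT4 h28
    obtain ⟨M', hM', hcard', hstep⟩ := kill_step hM π (by omega) hne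
    refine ⟨M', hM', by omega, ?_⟩
    calc 14 ^ (t + 1) * (FAT n k M' π).card
        = 14 ^ t * (14 * (FAT n k M' π).card) := by ring
      _ ≤ 14 ^ t * (13 * (FAT n k M π).card) := Nat.mul_le_mul_left _ hstep
      _ = 13 * (14 ^ t * (FAT n k M π).card) := by ring
      _ ≤ 13 * (13 ^ t * π.seq.length) := Nat.mul_le_mul_left _ hbound
      _ = 13 ^ (t + 1) * π.seq.length := by ring

/-- the exponential lower bound -/
theorem lower_bound (hodd : Odd (n - k)) (hH : 37 ≤ n - k)
    (π : ResRefutation (EmbeddedCNF (Psi n) n k)) :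
    14 ^ ((n - k) / 3) ≤ 13 ^ ((n - k) / 3) * π.size := by
  obtain ⟨M, hM, hcard, hbound⟩ := stage hodd hH π ((n - k) / 3) le_rfl
  have hTcard : (AP n k M).card = n - k + 1 - (n - k) / 3 := by
    rw [card_AP hM, hcard]
  have hT4 : 4 ≤ (AP n k M).card := by omega
  have h3T : 2 * (n - k) + 3 ≤ 3 * (AP n k M).card := by omega
  have h28 : 9 * ((n - k + 1) * (n - k)) ≤ 28 * (AP n k M).card ^ 2 := by
    have hsq : (2 * (n - k) + 3) * (2 * (n - k) + 3) ≤
        (3 * (AP n k M).card) * (3 * (AP n k M).card) := Nat.mul_le_mul h3T h3T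
    nlinarith [hsq]
  have hne := fat_nonempty hodd hM π hT4 h28
  have h1 : 1 ≤ (FAT n k M π).card := Finset.card_pos.2 hne
  calc 14 ^ ((n - k) / 3) = 14 ^ ((n - k) / 3) * 1 := by ring
    _ ≤ 14 ^ ((n - k) / 3) * (FAT n k M π).card := Nat.mul_le_mul_left _ h1
    _ ≤ 13 ^ ((n - k) / 3) * π.seq.length := hbound
    _ = 13 ^ ((n - k) / 3) * π.size := rfl

end PHPLB

namespace PHPLB

lemma two_le_pow1013 (q : ℕ) : 13 ^ q * 2 ^ (q / 10) ≤ 14 ^ q := by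
  have hq : q = 10 * (q / 10) + q % 10 := by omega
  set a := q / 10
  set r := q % 10
  calc 13 ^ q * 2 ^ a = (13 ^ 10) ^ a * 13 ^ r * 2 ^ a := by
        rw [hq, pow_add, pow_mul]
    _ = (13 ^ 10 * 2) ^ a * 13 ^ r := by rw [mul_pow]; ring
    _ ≤ (14 ^ 10) ^ a * 14 ^ r :=
        Nat.mul_le_mul (Nat.pow_le_pow_left (by norm_num) a)
          (Nat.pow_le_pow_left (by norm_num) r)
    _ = 14 ^ q := by rw [hq, pow_add, pow_mul]

lemma sq_le_two_pow : ∀ j, 4 ≤ j → j * j ≤ 2 ^ j := by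
  intro j hj
  induction j with
  | zero => omega
  | succ m ih =>
    rcases Nat.lt_or_ge m 4 with h | h
    · have hm : 3 ≤ m := by omega
      interval_cases m
      norm_num
    · have h1 := ih h
      have h2 : 2 ^ (m + 1) = 2 * 2 ^ m := by ring
      nlinarith [h1]

lemma lin_le_two_pow (a b : ℕ) : (4 + a + b) * a + b ≤ 2 ^ (4 + a + b) := by
  have h1 : (4 + a + b) * a + b ≤ (4 + a + b) * (4 + a + b) := by nlinarith
  exact le_trans h1 (sq_le_two_pow _ (by omega))

end PHPLB


/-- Lemma 6 and its Corollary: let `k` be odd. Then for no function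
`f : ℕ → ℕ` and positive integer `c` can the family `Ψ'_{n,k}` (`n` even, `n ≥ k`) be
refuted in Resolution in size `f(k)·n^c`: for every `f` and `c > 0` there is an even
`n ≥ k` such that every Resolution refutation of `Ψ'_{n,k}` has size greater than
`f(k)·n^c`. Consequently, embedded `W[1]`-parameterized Resolution is not fpt-bounded. -/
theorem embedded_psi_not_fpt_bounded (k : ℕ) (hk : Odd k) (f : ℕ → ℕ) (c : ℕ)
    (hc : 0 < c) :
    ∃ n : ℕ, Even n ∧ k ≤ n ∧
      ∀ π : ResRefutation (EmbeddedCNF (Psi n) n k), f k * n ^ c < π.size := by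
  classical
  set N := f k with hN
  set K := k + 37 with hK
  set j := 4 + c + (N * K ^ c + 1) with hj
  have hjle : j * c + (N * K ^ c + 1) ≤ 2 ^ j := PHPLB.lin_le_two_pow c (N * K ^ c + 1)
  have h2j : 1 ≤ 2 ^ j := Nat.one_le_two_pow
  set n := k + 30 * 2 ^ j + 7 with hn
  have hH : n - k = 30 * 2 ^ j + 7 := by omega
  refine ⟨n, ?_, by omega, ?_⟩
  · rw [hn, add_assoc]
    exact Odd.add_odd hk ⟨15 * 2 ^ j + 3, by ring⟩
  intro π
  have hodd : Odd (n - k) := by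
    rw [hH]; exact ⟨15 * 2 ^ j + 3, by ring⟩
  have h37 : 37 ≤ n - k := by omega
  have hlb := PHPLB.lower_bound hodd h37 π
  have hq : (n - k) / 3 = 10 * 2 ^ j + 2 := by omega
  have hq10 : (10 * 2 ^ j + 2) / 10 = 2 ^ j := by omega
  have hchain : 13 ^ ((n - k) / 3) * 2 ^ (2 ^ j) ≤ 13 ^ ((n - k) / 3) * π.size := by
    calc 13 ^ ((n - k) / 3) * 2 ^ (2 ^ j)
        = 13 ^ ((n - k) / 3) * 2 ^ (((n - k) / 3) / 10) := by rw [hq, hq10]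
      _ ≤ 14 ^ ((n - k) / 3) := PHPLB.two_le_pow1013 _
      _ ≤ 13 ^ ((n - k) / 3) * π.size := hlb
  have hsize : 2 ^ (2 ^ j) ≤ π.size :=
    Nat.le_of_mul_le_mul_left hchain (Nat.pow_pos (by norm_num))
  have hnK : n ≤ K * 2 ^ j := by
    have h1 : k ≤ k * 2 ^ j := Nat.le_mul_of_pos_right k (by omega)
    have h2 : K * 2 ^ j = k * 2 ^ j + 37 * 2 ^ j := by rw [hK]; ring
    omega
  have hnc : n ^ c ≤ K ^ c * 2 ^ (j * c) := by
    calc n ^ c ≤ (K * 2 ^ j) ^ c := Nat.pow_le_pow_left hnK c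
      _ = K ^ c * 2 ^ (j * c) := by rw [mul_pow, ← pow_mul]
  have hlt : N * K ^ c < 2 ^ (2 ^ j - j * c) := by
    calc N * K ^ c < 2 ^ (N * K ^ c) := Nat.lt_two_pow_self
      _ ≤ 2 ^ (2 ^ j - j * c) := Nat.pow_le_pow_right (by norm_num) (by omega)
  have hfin : N * n ^ c < 2 ^ (2 ^ j) := by
    calc N * n ^ c ≤ N * (K ^ c * 2 ^ (j * c)) := Nat.mul_le_mul_left N hnc
      _ = (N * K ^ c) * 2 ^ (j * c) := by ring
      _ < 2 ^ (2 ^ j - j * c) * 2 ^ (j * c) := by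
          have hp : 0 < 2 ^ (j * c) := Nat.pow_pos (by norm_num)
          exact (Nat.mul_lt_mul_right hp).2 hlt
      _ = 2 ^ (2 ^ j) := by rw [← pow_add]; congr 1; omega
  exact lt_of_lt_of_le hfin hsize
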